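/- If a final state of N violinists has its leftmost violinist in room r and its single 2-gap between the k-th and (k+1)-st occupied rooms (all other gaps of size 1), then its centroid equals r + N − k/N. Consequently, distinct final states have distinct centroids. -/

import Mathlib

/-- A two-sided dispersion move on single-occupancy states (finite sets of occupied rooms):
violinists in adjacent rooms `i` and `i+1` move to the nearest unoccupied rooms
`i - ℓ` (on the left) and `i + 1 + r` (on the right). -/
def FMove (S T : Finset ℤ) : Prop :=
  ∃ i ℓ r : ℤ, 1 ≤ ℓ ∧ 1 ≤ r ∧ i ∈ S ∧ i + 1 ∈ S ∧
    (∀ j : ℤ, 1 ≤ j → j < ℓ → i - j ∈ S) ∧ i - ℓ ∉ S ∧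
    (∀ j : ℤ, 2 ≤ j → j ≤ r → i + j ∈ S) ∧ i + 1 + r ∉ S ∧
    T = insert (i - ℓ) (insert (i + 1 + r) ((S.erase i).erase (i + 1)))

/-- Reachability by a sequence of moves. -/
def FReaches : Finset ℤ → Finset ℤ → Prop := Relation.ReflTransGen FMove

/-- A final state: no move is possible. -/
def FIsFinal (S : Finset ℤ) : Prop := ¬ ∃ T, FMove S T

/-- The centroid of a state: the average of the occupied room numbers. -/
noncomputable def centroidF (S : Finset ℤ) : ℚ := (∑ x ∈ S, (x : ℚ)) / S.card

/-- The shadow `F_{N,k}` with leftmost violinist at `p`: occupied rooms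
`p, p+2, ..., p+2(k-1), p+2k+1, p+2k+3, ..., p+2N-1`. -/
def shadow (N k : ℕ) (p : ℤ) : Finset ℤ :=
  (Finset.range N).image fun j => if j < k then p + 2 * j else p + 2 * j + 1


lemma shadow_injOn (N k : ℕ) (p : ℤ) :
    Set.InjOn (fun j : ℕ => if j < k then p + 2 * j else p + 2 * j + 1)
      (Finset.range N) := by
  intro a _ b _ h
  simp only at h
  split_ifs at h <;> omega

lemma shadow_card (N k : ℕ) (p : ℤ) : (shadow N k p).card = N := by
  rw [shadow, Finset.card_image_of_injOn (shadow_injOn N k p), Finset.card_range]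

lemma shadow_sum (N k : ℕ) (p : ℤ) (hk : k ≤ N) (hN : 1 ≤ N) :
    ∑ x ∈ shadow N k p, (x : ℚ) = N * p + N * N - k := by
  rw [shadow, Finset.sum_image (shadow_injOn N k p)]
  have h1 : ∀ j ∈ Finset.range N,
      ((if j < k then p + 2 * j else p + 2 * j + 1 : ℤ) : ℚ)
        = ((p : ℚ) + 2 * j) + (if j < k then 0 else 1) := by
    intro j _
    split_ifs <;> push_cast <;> ring
  rw [Finset.sum_congr rfl h1, Finset.sum_add_distrib]
  have h2 : ∑ j ∈ Finset.range N, (if j < k then (0:ℚ) else 1) = (N : ℚ) - k := by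
    rw [Finset.sum_ite, Finset.sum_const, Finset.sum_const]
    have he : (Finset.range N).filter (fun j => ¬ j < k) = Finset.Ico k N := by
      ext j; simp only [Finset.mem_filter, Finset.mem_Ico, Finset.mem_range]; omega
    simp only [he, Nat.card_Ico, smul_zero, smul_eq_mul, mul_one, zero_add,
      nsmul_eq_mul]
    rw [Nat.cast_sub hk]
  rw [h2, Finset.sum_add_distrib, Finset.sum_const, Finset.card_range]
  have h3 : ∑ j ∈ Finset.range N, (2 : ℚ) * j = (N : ℚ) * N - N := by
    rw [← Finset.mul_sum]
    have h := Finset.sum_range_id_mul_two N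
    have hq : ((∑ i ∈ Finset.range N, i : ℕ) : ℚ) * 2 = ((N * (N - 1) : ℕ) : ℚ) := by
      exact_mod_cast congrArg (Nat.cast : ℕ → ℚ) h
    rw [Nat.cast_mul, Nat.cast_sub hN] at hq
    push_cast at hq ⊢
    nlinarith [hq]
  rw [h3]
  ring

lemma centroid_shadow (N k : ℕ) (p : ℤ) (hk : k ≤ N) (hN : 1 ≤ N) :
    centroidF (shadow N k p) = (p : ℚ) + (N : ℚ) - (k : ℚ) / (N : ℚ) := by
  have hNQ : (N : ℚ) ≠ 0 := Nat.cast_ne_zero.mpr (by omega)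
  rw [centroidF, shadow_sum N k p hk hN, shadow_card]
  field_simp

/-- The centroid of the final state with leftmost violinist at `r` and the 2-gap after
the `k`-th occupied room equals `r + N - k/N`; consequently distinct final states
have distinct centroids. -/
theorem centroid_final_state (N k : ℕ) (r : ℤ) (hk1 : 1 ≤ k) (hk2 : k ≤ N - 1) :
    centroidF (shadow N k r) = (r : ℚ) + (N : ℚ) - (k : ℚ) / (N : ℚ) ∧
    ∀ (k' : ℕ) (r' : ℤ), 1 ≤ k' → k' ≤ N - 1 →
      centroidF (shadow N k r) = centroidF (shadow N k' r') → k = k' ∧ r = r' := by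
  have hN : 2 ≤ N := by omega
  have hNQ : (N : ℚ) ≠ 0 := by
    have : 0 < N := by omega
    exact_mod_cast this.ne'
  have h1 : centroidF (shadow N k r) = (r : ℚ) + (N : ℚ) - (k : ℚ) / (N : ℚ) :=
    centroid_shadow N k r (by omega) (by omega)
  refine ⟨h1, fun k' r' hk1' hk2' heq => ?_⟩
  have h2 : centroidF (shadow N k' r') = (r' : ℚ) + (N : ℚ) - (k' : ℚ) / (N : ℚ) :=
    centroid_shadow N k' r' (by omega) (by omega)
  rw [h1, h2] at heq
  have h3 : (r : ℚ) * N - k = (r' : ℚ) * N - k' := by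
    field_simp at heq
    linarith
  have h4 : (r : ℤ) * N - k = (r' : ℤ) * N - k' := by exact_mod_cast h3
  have hd : (r - r') * (N : ℤ) = (k : ℤ) - k' := by linear_combination h4
  have hNZ : (2 : ℤ) ≤ (N : ℤ) := by exact_mod_cast hN
  have hb1 : -(N : ℤ) < (k : ℤ) - (k' : ℤ) := by omega
  have hb2 : (k : ℤ) - (k' : ℤ) < (N : ℤ) := by omega
  have hrr : r = r' := by
    rcases lt_trichotomy r r' with h | h | h
    · nlinarith [mul_le_mul_of_nonneg_right (show r - r' ≤ -1 by omega)
        (show (0:ℤ) ≤ (N : ℤ) by omega)]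
    · exact h
    · nlinarith [mul_le_mul_of_nonneg_right (show (1:ℤ) ≤ r - r' by omega)
        (show (0:ℤ) ≤ (N : ℤ) by omega)]
  have hkk : k = k' := by
    rw [hrr] at hd
    simp at hd
    omega
  exact ⟨hkk, hrr⟩
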